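/- For all integers m ≥ 1 and k,p ≥ 0, A_S(m,k,p) = A_S(m−1,k,p) + (m−k+1)·A_S(m−1,k−1,p) + (m−p)·A_S(m−1,k−1,p−1) + (m−p)(m−k+1)·A_S(m−1,k−2,p−1), with the convention that A_S(m',k',p') = 0 whenever k' < 0 or p' < 0. -/

import Mathlib

open Finset

/-- `anassaCount3 m k p` is the number of `k`-element subsets `P` of `{1,…,m} × {1,…,m}`
such that any two distinct elements `(i,j)` and `(i',j')` of `P` satisfy `i ≠ i'` and
`i−j ≠ i'−j'`, and exactly `p` elements `(i,j)` of `P` satisfy `j < i` (nonattacking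
anassas on the `m × m` board with exactly `p` pieces strictly below the main diagonal). -/
def anassaCount3 (m k p : ℕ) : ℕ :=
  (((Finset.Icc 1 m ×ˢ Finset.Icc 1 m).powersetCard k).filter
    (fun P => (∀ a ∈ P, ∀ b ∈ P, a ≠ b →
        a.1 ≠ b.1 ∧ (a.1 : ℤ) - a.2 ≠ (b.1 : ℤ) - b.2) ∧
      (P.filter (fun a => a.2 < a.1)).card = p)).card

/-- `anassaCount3` extended to integer arguments `k, p`, vanishing when `k < 0` or `p < 0`. -/
def anassaCount3Z (m : ℕ) (k p : ℤ) : ℤ :=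
  if 0 ≤ k ∧ 0 ≤ p then anassaCount3 m k.toNat p.toNat else 0


open Finset

namespace AnassaAux

def board (m : ℕ) : Finset (ℕ × ℕ) := Finset.Icc 1 m ×ˢ Finset.Icc 1 m

def Good (P : Finset (ℕ × ℕ)) : Prop :=
  ∀ a ∈ P, ∀ b ∈ P, a ≠ b → a.1 ≠ b.1 ∧ (a.1 : ℤ) - a.2 ≠ (b.1 : ℤ) - b.2

instance : DecidablePred Good := fun P =>
  inferInstanceAs (Decidable (∀ a ∈ P, ∀ b ∈ P, a ≠ b → _ ∧ _))

def dg (a : ℕ × ℕ) : ℤ := (a.1 : ℤ) - a.2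

def S (m k p : ℕ) : Finset (Finset (ℕ × ℕ)) :=
  ((board m).powersetCard k).filter (fun P => Good P ∧ (P.filter (fun a => a.2 < a.1)).card = p)

lemma mem_board {m : ℕ} {a : ℕ × ℕ} :
    a ∈ board m ↔ (1 ≤ a.1 ∧ a.1 ≤ m) ∧ (1 ≤ a.2 ∧ a.2 ≤ m) := by
  simp [board, Finset.mem_product, Finset.mem_Icc]

lemma mem_S {m k p : ℕ} {P : Finset (ℕ × ℕ)} :
    P ∈ S m k p ↔ P ⊆ board m ∧ P.card = k ∧ Good P ∧
      (P.filter (fun a => a.2 < a.1)).card = p := by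
  simp [S, Finset.mem_powersetCard, and_assoc]

lemma good_col_inj {P : Finset (ℕ × ℕ)} (h : Good P) {a b : ℕ × ℕ}
    (ha : a ∈ P) (hb : b ∈ P) (hcol : a.1 = b.1) : a = b := by
  by_contra hne
  exact (h a ha b hb hne).1 hcol

lemma good_dg_inj {P : Finset (ℕ × ℕ)} (h : Good P) {a b : ℕ × ℕ}
    (ha : a ∈ P) (hb : b ∈ P) (hdg : dg a = dg b) : a = b := by
  by_contra hne
  exact (h a ha b hb hne).2 hdg

lemma good_subset {P Q : Finset (ℕ × ℕ)} (hPQ : P ⊆ Q) (h : Good Q) : Good P :=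
  fun a ha b hb hne => h a (hPQ ha) b (hPQ hb) hne

lemma good_insert {P : Finset (ℕ × ℕ)} (h : Good P) {x : ℕ × ℕ}
    (hcol : ∀ a ∈ P, a.1 ≠ x.1) (hdg : ∀ a ∈ P, dg a ≠ dg x) :
    Good (insert x P) := by
  intro a ha b hb hne
  rcases Finset.mem_insert.mp ha with ha' | ha'
  · rcases Finset.mem_insert.mp hb with hb' | hb'
    · exact absurd (ha'.trans hb'.symm) hne
    · subst ha'
      exact ⟨fun hc => hcol b hb' hc.symm, fun hd => hdg b hb' hd.symm⟩
  · rcases Finset.mem_insert.mp hb with hb' | hb'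
    · subst hb'
      exact ⟨hcol a ha', hdg a ha'⟩
    · exact h a ha' b hb' hne

lemma card_eq_card_image_fst {P : Finset (ℕ × ℕ)} (h : Good P) :
    (P.image Prod.fst).card = P.card :=
  Finset.card_image_of_injOn (fun a ha b hb hab => good_col_inj h ha hb hab)

end AnassaAux
namespace AnassaAux

def phiStep (m : ℕ) (rec : ℕ → Finset (ℕ × ℕ) → Finset (ℕ × ℕ)) (i : ℕ)
    (C : Finset (ℕ × ℕ)) : Finset (ℕ × ℕ) :=
  if h : ((C.filter (fun a => a.2 + i = a.1 + m)).image Prod.fst).Nonempty then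
    let c : ℕ := Finset.min' _ h
    insert (i, m) (rec c (C.erase (c, c + m - i)))
  else insert (i, m) C

def phiAux (m fuel : ℕ) : ℕ → Finset (ℕ × ℕ) → Finset (ℕ × ℕ) :=
  Nat.rec (fun i C => insert (i, m) C) (fun _ ih => phiStep m ih) fuel

def psiStep (m : ℕ) (rec : ℕ → Finset (ℕ × ℕ) → Finset (ℕ × ℕ)) (i : ℕ)
    (E : Finset (ℕ × ℕ)) : Finset (ℕ × ℕ) :=
  if h : ((E.filter (fun a => a.2 = m)).image Prod.fst).Nonempty then
    let c : ℕ := ((E.filter (fun a => a.2 = m)).image Prod.fst).max' h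
    insert (c, c + m - i) (rec c (E.erase (c, m)))
  else E

def psiAux (m fuel : ℕ) : ℕ → Finset (ℕ × ℕ) → Finset (ℕ × ℕ) :=
  Nat.rec (fun _ E => E) (fun _ ih => psiStep m ih) fuel

lemma phiAux_succ (m fuel i : ℕ) (C : Finset (ℕ × ℕ)) :
    phiAux m (fuel + 1) i C = phiStep m (phiAux m fuel) i C := rfl

lemma psiAux_succ (m fuel i : ℕ) (E : Finset (ℕ × ℕ)) :
    psiAux m (fuel + 1) i E = psiStep m (psiAux m fuel) i E := rfl

lemma dg_eq_iff {a : ℕ × ℕ} {i m : ℕ} : dg a = (i : ℤ) - m ↔ a.2 + i = a.1 + m := by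
  unfold dg; omega

lemma phiAux_no_conflict {m : ℕ} (fuel i : ℕ) {C : Finset (ℕ × ℕ)}
    (h : ∀ a ∈ C, ¬(a.2 + i = a.1 + m)) : phiAux m fuel i C = insert (i, m) C := by
  have he : ¬((C.filter (fun a => a.2 + i = a.1 + m)).image Prod.fst).Nonempty := by
    rw [Finset.image_nonempty, Finset.filter_nonempty_iff]
    push_neg
    exact h
  cases fuel with
  | zero => rfl
  | succ fuel => rw [phiAux_succ, phiStep, dif_neg he]

lemma psiAux_no_top {m : ℕ} (fuel i : ℕ) {E : Finset (ℕ × ℕ)}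
    (h : ∀ a ∈ E, a.2 ≠ m) : psiAux m fuel i E = E := by
  have he : ¬((E.filter (fun a => a.2 = m)).image Prod.fst).Nonempty := by
    rw [Finset.image_nonempty, Finset.filter_nonempty_iff]
    push_neg
    exact h
  cases fuel with
  | zero => rfl
  | succ fuel => rw [psiAux_succ, psiStep, dif_neg he]

lemma top_max_eq {m : ℕ} {E : Finset (ℕ × ℕ)} {c : ℕ} (hc : (c, m) ∈ E)
    (hle : ∀ a ∈ E, a.2 = m → a.1 ≤ c)
    (hne : ((E.filter (fun a => a.2 = m)).image Prod.fst).Nonempty) :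
    Finset.max' _ hne = c := by
  apply le_antisymm
  · apply Finset.max'_le
    intro y hy
    obtain ⟨a, ha, rfl⟩ := Finset.mem_image.mp hy
    obtain ⟨haE, ha2⟩ := Finset.mem_filter.mp ha
    exact hle a haE ha2
  · apply Finset.le_max'
    exact Finset.mem_image.mpr ⟨(c, m), Finset.mem_filter.mpr ⟨hc, rfl⟩, rfl⟩

lemma psiAux_step {m fuel i : ℕ} {E : Finset (ℕ × ℕ)} {c : ℕ} (hc : (c, m) ∈ E)
    (hle : ∀ a ∈ E, a.2 = m → a.1 ≤ c) :
    psiAux m (fuel + 1) i E = insert (c, c + m - i) (psiAux m fuel c (E.erase (c, m))) := by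
  have hne : ((E.filter (fun a => a.2 = m)).image Prod.fst).Nonempty :=
    ⟨c, Finset.mem_image.mpr ⟨(c, m), Finset.mem_filter.mpr ⟨hc, rfl⟩, rfl⟩⟩
  rw [psiAux_succ, psiStep, dif_pos hne]
  have hmax := top_max_eq (m := m) hc hle hne
  simp only [hmax]

lemma conflict_filter_eq {m i : ℕ} {C : Finset (ℕ × ℕ)} (hG : Good C) {x : ℕ × ℕ}
    (hx : x ∈ C) (hcond : x.2 + i = x.1 + m) :
    C.filter (fun a => a.2 + i = a.1 + m) = {x} := by
  ext b
  simp only [Finset.mem_filter, Finset.mem_singleton]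
  constructor
  · rintro ⟨hbC, hbcond⟩
    exact good_dg_inj hG hbC hx (by rw [dg_eq_iff.mpr hbcond, dg_eq_iff.mpr hcond])
  · rintro rfl
    exact ⟨hx, hcond⟩

lemma phiAux_step {m fuel i : ℕ} {C : Finset (ℕ × ℕ)} (hG : Good C) {x : ℕ × ℕ}
    (hx : x ∈ C) (hcond : x.2 + i = x.1 + m) :
    phiAux m (fuel + 1) i C = insert (i, m) (phiAux m fuel x.1 (C.erase x)) := by
  have hfe : C.filter (fun a => a.2 + i = a.1 + m) = {x} := conflict_filter_eq hG hx hcond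
  have hne : ((C.filter (fun a => a.2 + i = a.1 + m)).image Prod.fst).Nonempty := by
    rw [hfe]; simp
  rw [phiAux_succ, phiStep, dif_pos hne]
  have hmin : Finset.min' _ hne = x.1 := by
    simp only [hfe, Finset.image_singleton, Finset.min'_singleton]
  have hx2 : x.1 + m - i = x.2 := by omega
  simp only [hmin, hx2, Prod.mk.eta]

lemma image_insert_erase {α : Type*} [DecidableEq α] {C : Finset (ℕ × ℕ)} {a : ℕ × ℕ}
    (ha : a ∈ C) (f : ℕ × ℕ → α) :
    insert (f a) ((C.erase a).image f) = C.image f := by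
  rw [← Finset.image_insert, Finset.insert_erase ha]

end AnassaAux
namespace AnassaAux

lemma board_mono {m : ℕ} : board (m - 1) ⊆ board m := by
  intro a ha
  rw [mem_board] at ha ⊢
  omega

lemma INV1 (m : ℕ) (hm : 1 ≤ m) :
    ∀ fuel i C, i ≤ fuel → 1 ≤ i → i ≤ m → C ⊆ board (m - 1) → Good C →
      (∀ a ∈ C, a.1 ≠ i) →
      (phiAux m fuel i C ⊆ board m) ∧
      Good (phiAux m fuel i C) ∧
      ((phiAux m fuel i C).image Prod.fst = insert i (C.image Prod.fst)) ∧
      (∃ c, 1 ≤ c ∧ c ≤ i ∧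
        (phiAux m fuel i C).image dg = insert ((c : ℤ) - m) (C.image dg)) ∧
      ((phiAux m fuel i C).filter (fun a => a.2 < a.1) = C.filter (fun a => a.2 < a.1)) ∧
      ((i, m) ∈ phiAux m fuel i C) ∧
      (∀ a ∈ phiAux m fuel i C, a.2 = m → a.1 ≤ i) ∧
      (∀ a ∈ phiAux m fuel i C, a.1 = m → a = (i, m)) ∧
      (∀ fuel', i ≤ fuel' → psiAux m fuel' i ((phiAux m fuel i C).erase (i, m)) = C) := by
  intro fuel
  induction fuel with
  | zero => intro i C h0 h1 _ _ _ _; omega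
  | succ fuel ih =>
    intro i C hif h1i him hCb hG hiC
    have hCbd : ∀ a ∈ C, (1 ≤ a.1 ∧ a.1 ≤ m - 1) ∧ (1 ≤ a.2 ∧ a.2 ≤ m - 1) :=
      fun a ha => mem_board.mp (hCb ha)
    by_cases hcf : ∃ x ∈ C, x.2 + i = x.1 + m
    · -- conflict case
      obtain ⟨x, hx, hcond⟩ := hcf
      have hxb := hCbd x hx
      have hx1i : x.1 < i := by omega
      rw [phiAux_step hG hx hcond]
      have hC'b : C.erase x ⊆ board (m - 1) := (Finset.erase_subset _ _).trans hCb
      have hC'G : Good (C.erase x) := good_subset (Finset.erase_subset _ _) hG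
      have hC'col : ∀ a ∈ C.erase x, a.1 ≠ x.1 := by
        intro a ha hax
        obtain ⟨hax', haC⟩ := Finset.mem_erase.mp ha
        exact hax' (good_col_inj hG haC hx hax)
      obtain ⟨hD'b, hD'G, hD'cols, ⟨c, hc1, hcle, hD'dgs⟩, hD'bel, hD'mem, hD'tops,
          hD'colm, hD'psi⟩ :=
        ih x.1 (C.erase x) (by omega) (by omega) (by omega) hC'b hC'G hC'col
      have hcolsC : insert x.1 ((C.erase x).image Prod.fst) = C.image Prod.fst :=
        image_insert_erase hx Prod.fst
      have hdgx : dg x = (i : ℤ) - m := dg_eq_iff.mpr hcond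
      have hdgsC : insert ((i : ℤ) - m) ((C.erase x).image dg) = C.image dg := by
        rw [← hdgx]; exact image_insert_erase hx dg
      have hiD' : ∀ a ∈ phiAux m fuel x.1 (C.erase x), a.1 ≠ i := by
        intro a ha hai
        have h1 : a.1 ∈ (phiAux m fuel x.1 (C.erase x)).image Prod.fst :=
          Finset.mem_image_of_mem _ ha
        rw [hD'cols, hcolsC] at h1
        rw [hai] at h1
        obtain ⟨b, hb, hb1⟩ := Finset.mem_image.mp h1
        exact hiC b hb hb1
      have him' : (i, m) ∉ phiAux m fuel x.1 (C.erase x) := fun h => hiD' _ h rfl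
      have hdgD' : ∀ a ∈ phiAux m fuel x.1 (C.erase x), dg a ≠ (i : ℤ) - m := by
        intro a ha hdga
        have h1 : dg a ∈ (phiAux m fuel x.1 (C.erase x)).image dg :=
          Finset.mem_image_of_mem _ ha
        rw [hD'dgs, hdga] at h1
        rcases Finset.mem_insert.mp h1 with h2 | h2
        · have : c = i := by omega
          omega
        · obtain ⟨b, hb, hbdg⟩ := Finset.mem_image.mp h2
          obtain ⟨hbx, hbC⟩ := Finset.mem_erase.mp hb
          exact hbx (good_dg_inj hG hbC hx (by rw [hbdg, hdgx]))
      refine ⟨?_, ?_, ?_, ?_, ?_, ?_, ?_, ?_, ?_⟩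
      · -- subset
        intro a ha
        rcases Finset.mem_insert.mp ha with rfl | ha'
        · exact mem_board.mpr ⟨⟨h1i, him⟩, ⟨hm, le_refl m⟩⟩
        · exact hD'b ha'
      · exact good_insert hD'G (fun a ha => hiD' a ha) (fun a ha hd => hdgD' a ha (by rw [hd]; rfl))
      · rw [Finset.image_insert, hD'cols, hcolsC]
      · refine ⟨c, hc1, by omega, ?_⟩
        rw [Finset.image_insert, hD'dgs]
        have : dg (i, m) = (i : ℤ) - m := rfl
        rw [this, Finset.insert_comm, hdgsC]
      · rw [Finset.filter_insert, if_neg (by simp; omega), hD'bel, Finset.filter_erase,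
          Finset.erase_eq_of_notMem]
        intro hmem
        have := Finset.mem_filter.mp hmem
        omega
      · exact Finset.mem_insert_self _ _
      · intro a ha ham
        rcases Finset.mem_insert.mp ha with rfl | ha'
        · exact le_refl i
        · have := hD'tops a ha' ham
          omega
      · intro a ha ham
        rcases Finset.mem_insert.mp ha with rfl | ha'
        · rfl
        · have := hD'colm a ha' ham
          rw [this] at ham ⊢
          simp at ham ⊢
          omega
      · intro fuel' hf'
        obtain ⟨f', rfl⟩ : ∃ f', fuel' = f' + 1 := ⟨fuel' - 1, by omega⟩
        rw [Finset.erase_insert him']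
        rw [psiAux_step hD'mem hD'tops, hD'psi f' (by omega)]
        have hxe : x.1 + m - i = x.2 := by omega
        rw [hxe, Prod.mk.eta, Finset.insert_erase hx]
    · -- no conflict case
      push_neg at hcf
      rw [phiAux_no_conflict (fuel + 1) i hcf]
      have him' : (i, m) ∉ C := by
        intro h
        have := hCbd _ h
        omega
      have hdgC : ∀ a ∈ C, dg a ≠ (i : ℤ) - m := fun a ha h => hcf a ha (dg_eq_iff.mp h)
      refine ⟨?_, ?_, ?_, ?_, ?_, ?_, ?_, ?_, ?_⟩
      · intro a ha
        rcases Finset.mem_insert.mp ha with rfl | ha'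
        · exact mem_board.mpr ⟨⟨h1i, him⟩, ⟨hm, le_refl m⟩⟩
        · exact board_mono (hCb ha')
      · exact good_insert hG (fun a ha => hiC a ha) (fun a ha hd => hdgC a ha (by rw [hd]; rfl))
      · rw [Finset.image_insert]
      · refine ⟨i, h1i, le_refl i, ?_⟩
        rw [Finset.image_insert]
        rfl
      · rw [Finset.filter_insert, if_neg (by simp; omega)]
      · exact Finset.mem_insert_self _ _
      · intro a ha ham
        rcases Finset.mem_insert.mp ha with rfl | ha'
        · exact le_refl i
        · have := hCbd a ha'
          omega
      · intro a ha ham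
        rcases Finset.mem_insert.mp ha with rfl | ha'
        · rfl
        · have := hCbd a ha'
          omega
      · intro fuel' _
        rw [Finset.erase_insert him']
        exact psiAux_no_top fuel' i (fun a ha ham => by have := hCbd a ha; omega)

end AnassaAux
namespace AnassaAux

lemma INV2 (m : ℕ) (hm : 1 ≤ m) :
    ∀ fuel i E, i ≤ fuel → 1 ≤ i → i ≤ m →
      E ⊆ Finset.Icc 1 (m - 1) ×ˢ Finset.Icc 1 m → Good E →
      (∀ a ∈ E, a.2 = m → a.1 < i) → (∀ a ∈ E, dg a ≠ (i : ℤ) - m) →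
      (∀ a ∈ E, a.1 ≠ i) →
      (psiAux m fuel i E ⊆ board (m - 1)) ∧
      Good (psiAux m fuel i E) ∧
      ((psiAux m fuel i E).image Prod.fst = E.image Prod.fst) ∧
      ((psiAux m fuel i E).image dg ⊆ insert ((i : ℤ) - m) (E.image dg)) ∧
      ((psiAux m fuel i E).filter (fun a => a.2 < a.1) = E.filter (fun a => a.2 < a.1)) ∧
      (∀ fuel', i ≤ fuel' → phiAux m fuel' i (psiAux m fuel i E) = insert (i, m) E) := by
  intro fuel
  induction fuel with
  | zero => intro i E h0 h1 _ _ _ _ _ _; omega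
  | succ fuel ih =>
    intro i E hif h1i him hEb hG htopi hdgi hcoli
    have hEbd : ∀ a ∈ E, (1 ≤ a.1 ∧ a.1 ≤ m - 1) ∧ (1 ≤ a.2 ∧ a.2 ≤ m) := by
      intro a ha
      have := hEb ha
      rw [Finset.mem_product, Finset.mem_Icc, Finset.mem_Icc] at this
      exact this
    by_cases htop : ∃ a ∈ E, a.2 = m
    · -- there is a top piece
      obtain ⟨b, hbE, hb2⟩ := htop
      have hne : ((E.filter (fun a => a.2 = m)).image Prod.fst).Nonempty :=
        ⟨b.1, Finset.mem_image.mpr ⟨b, Finset.mem_filter.mpr ⟨hbE, hb2⟩, rfl⟩⟩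
      set c := ((E.filter (fun a => a.2 = m)).image Prod.fst).max' hne with hc
      have hcE : (c, m) ∈ E := by
        have := Finset.max'_mem _ hne
        rw [← hc] at this
        obtain ⟨a, ha, ha1⟩ := Finset.mem_image.mp this
        obtain ⟨haE, ha2⟩ := Finset.mem_filter.mp ha
        have : a = (c, m) := by rw [← ha1, ← ha2]
        rwa [this] at haE
      have htople : ∀ a ∈ E, a.2 = m → a.1 ≤ c := by
        intro a ha ha2
        apply Finset.le_max'
        exact Finset.mem_image.mpr ⟨a, Finset.mem_filter.mpr ⟨ha, ha2⟩, rfl⟩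
      have hci : c < i := htopi _ hcE rfl
      have hc1 : 1 ≤ c := (hEbd _ hcE).1.1
      rw [psiAux_step hcE htople]
      have hE'b : E.erase (c, m) ⊆ Finset.Icc 1 (m - 1) ×ˢ Finset.Icc 1 m :=
        (Finset.erase_subset _ _).trans hEb
      have hE'G : Good (E.erase (c, m)) := good_subset (Finset.erase_subset _ _) hG
      have hE'top : ∀ a ∈ E.erase (c, m), a.2 = m → a.1 < c := by
        intro a ha ha2
        obtain ⟨hane, haE⟩ := Finset.mem_erase.mp ha
        have hle := htople a haE ha2
        rcases lt_or_eq_of_le hle with h | h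
        · exact h
        · exfalso
          apply hane
          apply good_col_inj hG haE hcE
          exact h
      have hE'dg : ∀ a ∈ E.erase (c, m), dg a ≠ (c : ℤ) - m := by
        intro a ha hdga
        obtain ⟨hane, haE⟩ := Finset.mem_erase.mp ha
        apply hane
        apply good_dg_inj hG haE hcE
        rw [hdga]; rfl
      have hE'col : ∀ a ∈ E.erase (c, m), a.1 ≠ c := by
        intro a ha hac
        obtain ⟨hane, haE⟩ := Finset.mem_erase.mp ha
        exact hane (good_col_inj hG haE hcE hac)
      obtain ⟨hC'b, hC'G, hC'cols, hC'dgs, hC'bel, hC'phi⟩ :=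
        ih c (E.erase (c, m)) (by omega) hc1 (by omega) hE'b hE'G hE'top hE'dg hE'col
      have hcolsE : insert c ((E.erase (c, m)).image Prod.fst) = E.image Prod.fst := by
        have := image_insert_erase hcE Prod.fst
        exact this
      have hxcond : (c + m - i) + i = c + m := by omega
      have hxdg : dg (c, c + m - i) = (i : ℤ) - m := dg_eq_iff.mpr hxcond
      have hxcolC' : ∀ a ∈ psiAux m fuel c (E.erase (c, m)), a.1 ≠ c := by
        intro a ha hac
        have h1 : a.1 ∈ (psiAux m fuel c (E.erase (c, m))).image Prod.fst :=
          Finset.mem_image_of_mem _ ha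
        rw [hC'cols] at h1
        rw [hac] at h1
        obtain ⟨b', hb', hb1⟩ := Finset.mem_image.mp h1
        exact hE'col b' hb' hb1
      have hxC' : (c, c + m - i) ∉ psiAux m fuel c (E.erase (c, m)) :=
        fun h => hxcolC' _ h rfl
      have hdgC' : ∀ a ∈ psiAux m fuel c (E.erase (c, m)), dg a ≠ (i : ℤ) - m := by
        intro a ha hdga
        have h1 : dg a ∈ (psiAux m fuel c (E.erase (c, m))).image dg :=
          Finset.mem_image_of_mem _ ha
        have h2 := hC'dgs h1
        rcases Finset.mem_insert.mp h2 with h3 | h3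
        · rw [hdga] at h3
          omega
        · obtain ⟨b', hb', hbdg⟩ := Finset.mem_image.mp h3
          exact hdgi b' (Finset.mem_of_mem_erase hb') (by rw [hbdg, hdga])
      have hGC : Good (insert (c, c + m - i) (psiAux m fuel c (E.erase (c, m)))) := by
        apply good_insert hC'G
        · intro a ha
          exact hxcolC' a ha
        · intro a ha hd
          exact hdgC' a ha (by rw [hd, hxdg])
      refine ⟨?_, hGC, ?_, ?_, ?_, ?_⟩
      · -- subset of board (m-1)
        intro a ha
        rcases Finset.mem_insert.mp ha with rfl | ha'
        · rw [mem_board]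
          constructor
          · constructor <;> omega
          · constructor <;> omega
        · exact hC'b ha'
      · rw [Finset.image_insert, hC'cols]
        exact hcolsE
      · rw [Finset.image_insert]
        intro d hd
        rcases Finset.mem_insert.mp hd with rfl | hd'
        · rw [hxdg]
          exact Finset.mem_insert_self _ _
        · have h2 := hC'dgs hd'
          rcases Finset.mem_insert.mp h2 with h3 | h3
          · rw [h3]
            apply Finset.mem_insert_of_mem
            exact Finset.mem_image.mpr ⟨(c, m), hcE, rfl⟩
          · apply Finset.mem_insert_of_mem
            exact Finset.image_subset_image (Finset.erase_subset _ _) h3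
      · rw [Finset.filter_insert, if_neg (by simp; omega), hC'bel, Finset.filter_erase,
          Finset.erase_eq_of_notMem]
        intro hmem
        have := Finset.mem_filter.mp hmem
        simp at this
        omega
      · intro fuel' hf'
        obtain ⟨f', rfl⟩ : ∃ f', fuel' = f' + 1 := ⟨fuel' - 1, by omega⟩
        rw [phiAux_step hGC (Finset.mem_insert_self _ _) hxcond]
        rw [Finset.erase_insert hxC']
        rw [hC'phi f' (by omega)]
        rw [Finset.insert_erase hcE]
    · -- no top piece
      push_neg at htop
      rw [psiAux_no_top (fuel + 1) i htop]
      refine ⟨?_, hG, rfl, Finset.subset_insert _ _, rfl, ?_⟩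
      · intro a ha
        have h1 := hEbd a ha
        have h2 := htop a ha
        rw [mem_board]
        omega
      · intro fuel' _
        apply phiAux_no_conflict
        intro a ha hcond
        exact hdgi a ha (dg_eq_iff.mpr hcond)

end AnassaAux
namespace AnassaAux

def topcol (m : ℕ) (P : Finset (ℕ × ℕ)) : ℕ := (P.filter (fun a => a.2 = m)).sup Prod.fst

lemma topcol_mem {m : ℕ} {P : Finset (ℕ × ℕ)} (hX : ∃ a ∈ P, a.2 = m) :
    (topcol m P, m) ∈ P := by
  obtain ⟨b, hb, hb2⟩ := hX
  have hne : (P.filter (fun a => a.2 = m)).Nonempty := ⟨b, Finset.mem_filter.mpr ⟨hb, hb2⟩⟩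
  obtain ⟨x, hx, hsup⟩ := Finset.exists_mem_eq_sup _ hne Prod.fst
  obtain ⟨hxP, hx2⟩ := Finset.mem_filter.mp hx
  have : (topcol m P, m) = x := by
    rw [Prod.ext_iff]
    exact ⟨by rw [topcol, hsup], hx2.symm⟩
  rwa [this]

lemma topcol_le {m : ℕ} {P : Finset (ℕ × ℕ)} :
    ∀ a ∈ P, a.2 = m → a.1 ≤ topcol m P := by
  intro a ha ha2
  exact Finset.le_sup (Finset.mem_filter.mpr ⟨ha, ha2⟩)

def psiFull (m : ℕ) (P : Finset (ℕ × ℕ)) : Finset (ℕ × ℕ) :=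
  psiAux m m (topcol m P) (P.erase (topcol m P, m))

/-- Specification of the collapse map on the chain class. -/
lemma psiFull_spec {m k p t : ℕ} (hm : 1 ≤ m) {P : Finset (ℕ × ℕ)}
    (hPS : P ∈ S m k p) (hX : ∃ a ∈ P, a.2 = m)
    (hcolm : ∀ a ∈ P, a.1 = m → (a.2 = m ∧ m ≤ t)) (ht1 : m - 1 ≤ t) (ht2 : t ≤ m) :
    psiFull m P ∈ S (m - 1) (k - 1) p ∧
    1 ≤ topcol m P ∧ topcol m P ≤ t ∧
    topcol m P ∉ (psiFull m P).image Prod.fst ∧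
    (∀ fuel', topcol m P ≤ fuel' →
      phiAux m fuel' (topcol m P) (psiFull m P) = P) := by
  obtain ⟨hPb, hPcard, hPG, hPbel⟩ := mem_S.mp hPS
  set c₀ := topcol m P with hc₀
  have hc₀P : (c₀, m) ∈ P := topcol_mem hX
  have hc₀le : ∀ a ∈ P, a.2 = m → a.1 ≤ c₀ := topcol_le
  have hc₀bd := mem_board.mp (hPb hc₀P)
  have hc₀t : c₀ ≤ t := by
    rcases Nat.lt_or_ge c₀ m with h | h
    · omega
    · have h1 : c₀ = m := by omega
      have := (hcolm (c₀, m) hc₀P h1).2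
      omega
  have hE : P.erase (c₀, m) ⊆ Finset.Icc 1 (m - 1) ×ˢ Finset.Icc 1 m := by
    intro a ha
    obtain ⟨hane, haP⟩ := Finset.mem_erase.mp ha
    have habd := mem_board.mp (hPb haP)
    rw [Finset.mem_product, Finset.mem_Icc, Finset.mem_Icc]
    refine ⟨⟨habd.1.1, ?_⟩, habd.2⟩
    rcases Nat.lt_or_ge a.1 m with h | h
    · omega
    · exfalso
      have ha1 : a.1 = m := by omega
      have ha2 := (hcolm a haP ha1).1
      have hle : a.1 ≤ c₀ := hc₀le a haP ha2
      have : a = (c₀, m) := by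
        apply good_col_inj hPG haP hc₀P
        simp only []
        omega
      exact hane this
  have hEG : Good (P.erase (c₀, m)) := good_subset (Finset.erase_subset _ _) hPG
  have hEtop : ∀ a ∈ P.erase (c₀, m), a.2 = m → a.1 < c₀ := by
    intro a ha ha2
    obtain ⟨hane, haP⟩ := Finset.mem_erase.mp ha
    have := hc₀le a haP ha2
    rcases lt_or_eq_of_le this with h | h
    · exact h
    · exact absurd (good_col_inj hPG haP hc₀P (by omega)) hane
  have hEdg : ∀ a ∈ P.erase (c₀, m), dg a ≠ (c₀ : ℤ) - m := by
    intro a ha hdga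
    obtain ⟨hane, haP⟩ := Finset.mem_erase.mp ha
    exact hane (good_dg_inj hPG haP hc₀P (by rw [hdga]; rfl))
  have hEcol : ∀ a ∈ P.erase (c₀, m), a.1 ≠ c₀ := by
    intro a ha hac
    obtain ⟨hane, haP⟩ := Finset.mem_erase.mp ha
    exact hane (good_col_inj hPG haP hc₀P hac)
  obtain ⟨hCb, hCG, hCcols, hCdgs, hCbel, hCphi⟩ :=
    INV2 m hm m c₀ (P.erase (c₀, m)) hc₀bd.1.2 hc₀bd.1.1 hc₀bd.1.2 hE hEG hEtop hEdg hEcol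
  have hmemS : psiFull m P ∈ S (m - 1) (k - 1) p := by
    rw [mem_S]
    refine ⟨hCb, ?_, hCG, ?_⟩
    · have h1 := card_eq_card_image_fst hCG
      have h2 := card_eq_card_image_fst hEG
      rw [psiFull, ← hc₀, ← h1, hCcols, h2, Finset.card_erase_of_mem hc₀P, hPcard]
    · rw [psiFull, ← hc₀, hCbel, Finset.filter_erase, Finset.erase_eq_of_notMem, hPbel]
      intro hmem
      have := Finset.mem_filter.mp hmem
      simp at this
      omega
  refine ⟨hmemS, hc₀bd.1.1, hc₀t, ?_, ?_⟩
  · intro hmem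
    rw [psiFull, ← hc₀, hCcols] at hmem
    obtain ⟨b, hb, hb1⟩ := Finset.mem_image.mp hmem
    exact hEcol b hb hb1
  · intro fuel' hf'
    rw [psiFull, ← hc₀, hCphi fuel' hf', Finset.insert_erase hc₀P]

/-- Specification of the insertion map. -/
lemma phiFull_spec {m k p t : ℕ} (hm : 1 ≤ m) (hk : 1 ≤ k) {C : Finset (ℕ × ℕ)}
    (hCS : C ∈ S (m - 1) (k - 1) p) {i : ℕ} (h1i : 1 ≤ i) (hit : i ≤ t) (ht2 : t ≤ m)
    (hiC : i ∉ C.image Prod.fst) :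
    phiAux m i i C ∈ S m k p ∧
    (∃ a ∈ phiAux m i i C, a.2 = m) ∧
    (∀ a ∈ phiAux m i i C, a.1 = m → (a.2 = m ∧ m ≤ t)) ∧
    topcol m (phiAux m i i C) = i ∧
    psiFull m (phiAux m i i C) = C := by
  obtain ⟨hCb, hCcard, hCG, hCbel⟩ := mem_S.mp hCS
  have hiC' : ∀ a ∈ C, a.1 ≠ i := by
    intro a ha hai
    exact hiC (Finset.mem_image.mpr ⟨a, ha, hai⟩)
  obtain ⟨hDb, hDG, hDcols, _, hDbel, hDmem, hDtops, hDcolm, hDpsi⟩ :=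
    INV1 m hm i i C (le_refl i) h1i (by omega) hCb hCG hiC'
  have htcol : topcol m (phiAux m i i C) = i := by
    rw [topcol]
    apply le_antisymm
    · exact Finset.sup_le (fun b hb =>
        hDtops b (Finset.mem_filter.mp hb).1 (Finset.mem_filter.mp hb).2)
    · exact Finset.le_sup (f := Prod.fst) (b := ((i : ℕ), m)) (Finset.mem_filter.mpr ⟨hDmem, rfl⟩)
  refine ⟨?_, ⟨(i, m), hDmem, rfl⟩, ?_, htcol, ?_⟩
  · rw [mem_S]
    refine ⟨hDb, ?_, hDG, by rw [hDbel, hCbel]⟩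
    · have h1 := card_eq_card_image_fst hDG
      have h2 := card_eq_card_image_fst hCG
      rw [← h1, hDcols, Finset.card_insert_of_notMem hiC, h2, hCcard]
      omega
  · intro a ha ham
    have := hDcolm a ha ham
    rw [this]
    refine ⟨rfl, ?_⟩
    have : i = m := by rw [this] at ham; exact ham.symm ▸ rfl
    omega
  · rw [psiFull, htcol]
    exact hDpsi m (by omega)

end AnassaAux
namespace AnassaAux

lemma chain_card (m k p t : ℕ) (hm : 1 ≤ m) (hk : 1 ≤ k) (ht1 : m - 1 ≤ t) (ht2 : t ≤ m) :
    ((S m k p).filter (fun P => (∃ a ∈ P, a.2 = m) ∧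
        (∀ a ∈ P, a.1 = m → (a.2 = m ∧ m ≤ t)))).card
      = (t - (k - 1)) * (S (m - 1) (k - 1) p).card := by
  have hstep1 : ∀ P ∈ (S m k p).filter (fun P => (∃ a ∈ P, a.2 = m) ∧
      (∀ a ∈ P, a.1 = m → (a.2 = m ∧ m ≤ t))), psiFull m P ∈ S (m - 1) (k - 1) p := by
    intro P hP
    obtain ⟨hPS, hX, hcolm⟩ := Finset.mem_filter.mp hP
    exact (psiFull_spec hm hPS hX hcolm ht1 ht2).1
  rw [Finset.card_eq_sum_card_fiberwise hstep1]
  have hfib : ∀ C ∈ S (m - 1) (k - 1) p,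
      (((S m k p).filter (fun P => (∃ a ∈ P, a.2 = m) ∧
        (∀ a ∈ P, a.1 = m → (a.2 = m ∧ m ≤ t)))).filter (fun P => psiFull m P = C)).card
      = t - (k - 1) := by
    intro C hC
    obtain ⟨hCb, hCcard, hCG, hCbel⟩ := mem_S.mp hC
    have hbij : (((S m k p).filter (fun P => (∃ a ∈ P, a.2 = m) ∧
        (∀ a ∈ P, a.1 = m → (a.2 = m ∧ m ≤ t)))).filter (fun P => psiFull m P = C)).card
        = ((Finset.Icc 1 t).filter (fun i => i ∉ C.image Prod.fst)).card := by
      apply Finset.card_bij' (fun P _ => topcol m P) (fun i _ => phiAux m i i C)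
      · intro P hP
        obtain ⟨hP1, hPpsi⟩ := Finset.mem_filter.mp hP
        obtain ⟨hPS, hX, hcolm⟩ := Finset.mem_filter.mp hP1
        obtain ⟨_, h1, h2, h3, _⟩ := psiFull_spec hm hPS hX hcolm ht1 ht2
        rw [Finset.mem_filter, Finset.mem_Icc]
        rw [hPpsi] at h3
        exact ⟨⟨h1, h2⟩, h3⟩
      · intro i hi
        rw [Finset.mem_filter, Finset.mem_Icc] at hi
        obtain ⟨⟨h1i, hit⟩, hiC⟩ := hi
        obtain ⟨hmem, hX, hcolm, _, hpsi⟩ := phiFull_spec hm hk hC h1i hit ht2 hiC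
        rw [Finset.mem_filter, Finset.mem_filter]
        exact ⟨⟨hmem, hX, hcolm⟩, hpsi⟩
      · intro P hP
        obtain ⟨hP1, hPpsi⟩ := Finset.mem_filter.mp hP
        obtain ⟨hPS, hX, hcolm⟩ := Finset.mem_filter.mp hP1
        obtain ⟨_, _, _, _, hphi⟩ := psiFull_spec hm hPS hX hcolm ht1 ht2
        rw [← hPpsi]
        exact hphi (topcol m P) (le_refl _)
      · intro i hi
        rw [Finset.mem_filter, Finset.mem_Icc] at hi
        obtain ⟨⟨h1i, hit⟩, hiC⟩ := hi
        exact (phiFull_spec hm hk hC h1i hit ht2 hiC).2.2.2.1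
    rw [hbij]
    have hsub : C.image Prod.fst ⊆ Finset.Icc 1 t := by
      intro x hx
      obtain ⟨a, ha, rfl⟩ := Finset.mem_image.mp hx
      have := mem_board.mp (hCb ha)
      rw [Finset.mem_Icc]
      omega
    rw [← Finset.sdiff_eq_filter, Finset.card_sdiff_of_subset hsub, Nat.card_Icc,
      card_eq_card_image_fst hCG, hCcard]
    omega
  rw [Finset.sum_congr rfl hfib, Finset.sum_const, smul_eq_mul, mul_comm]

end AnassaAux
namespace AnassaAux

lemma S_pred_eq (m k p : ℕ) (hm : 1 ≤ m) :
    (S m k p).filter (fun P => (∀ a ∈ P, a.1 ≠ m) ∧ (∀ a ∈ P, a.2 ≠ m)) = S (m - 1) k p := by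
  ext P
  rw [Finset.mem_filter, mem_S, mem_S]
  constructor
  · rintro ⟨⟨hb, hc, hg, hbel⟩, hcol, hrow⟩
    refine ⟨?_, hc, hg, hbel⟩
    intro a ha
    have h1 := mem_board.mp (hb ha)
    have h2 := hcol a ha
    have h3 := hrow a ha
    rw [mem_board]
    omega
  · rintro ⟨hb, hc, hg, hbel⟩
    refine ⟨⟨hb.trans board_mono, hc, hg, hbel⟩, ?_, ?_⟩ <;>
    · intro a ha
      have h1 := mem_board.mp (hb ha)
      omega

def rowm (m : ℕ) (P : Finset (ℕ × ℕ)) : ℕ := (P.filter (fun a => a.1 = m)).sup Prod.snd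

lemma colm_filter_eq {m : ℕ} {P : Finset (ℕ × ℕ)} (hG : Good P) {x : ℕ × ℕ}
    (hx : x ∈ P) (hx1 : x.1 = m) : P.filter (fun a => a.1 = m) = {x} := by
  ext b
  rw [Finset.mem_filter, Finset.mem_singleton]
  constructor
  · rintro ⟨hbP, hb1⟩
    exact good_col_inj hG hbP hx (by rw [hb1, hx1])
  · rintro rfl
    exact ⟨hx, hx1⟩

lemma rowm_eq {m : ℕ} {P : Finset (ℕ × ℕ)} (hG : Good P) {x : ℕ × ℕ}
    (hx : x ∈ P) (hx1 : x.1 = m) : rowm m P = x.2 := by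
  rw [rowm, colm_filter_eq hG hx hx1, Finset.sup_singleton]

lemma erase_colm_eq {m : ℕ} {P : Finset (ℕ × ℕ)} (hG : Good P) {x : ℕ × ℕ}
    (hx : x ∈ P) (hx1 : x.1 = m) : P.filter (fun a => a.1 ≠ m) = P.erase x := by
  ext b
  rw [Finset.mem_filter, Finset.mem_erase]
  constructor
  · rintro ⟨hbP, hb1⟩
    refine ⟨?_, hbP⟩
    intro h
    rw [h] at hb1
    exact hb1 hx1
  · rintro ⟨hbne, hbP⟩
    refine ⟨hbP, ?_⟩
    intro h
    exact hbne (good_col_inj hG hbP hx (by rw [h, hx1]))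

lemma below_dg_count {m p' : ℕ} {C : Finset (ℕ × ℕ)} (hCb : C ⊆ board m)
    (hCG : Good C) (hbel : (C.filter (fun a => a.2 < a.1)).card = p') :
    (((Finset.Icc 1 (m - 1) : Finset ℕ)).filter (fun j => ((m : ℤ) - (j : ℕ)) ∈ C.image dg)).card
      = p' := by
  rw [← hbel]
  symm
  apply Finset.card_nbij (fun b => m + b.2 - b.1)
  · intro b hb
    obtain ⟨hbC, hbbel⟩ := Finset.mem_filter.mp hb
    have hbd := mem_board.mp (hCb hbC)
    simp only [Finset.mem_coe]
    rw [Finset.mem_filter, Finset.mem_Icc]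
    refine ⟨⟨by omega, by omega⟩, ?_⟩
    have : (m : ℤ) - ((m + b.2 - b.1 : ℕ) : ℤ) = dg b := by
      unfold dg; omega
    rw [this]
    exact Finset.mem_image_of_mem _ hbC
  · intro b hb b' hb' heq
    simp only [Finset.coe_filter, Set.mem_setOf_eq] at hb hb'
    obtain ⟨hbC, hbbel⟩ := hb
    obtain ⟨hbC', hbbel'⟩ := hb'
    have hbd := mem_board.mp (hCb hbC)
    have hbd' := mem_board.mp (hCb hbC')
    have heq' : m + b.2 - b.1 = m + b'.2 - b'.1 := heq
    apply good_dg_inj hCG hbC hbC'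
    unfold dg
    omega
  · intro j hj
    simp only [Finset.coe_filter, Set.mem_setOf_eq, Finset.mem_Icc] at hj
    obtain ⟨⟨hj1, hj2⟩, hjdg⟩ := hj
    obtain ⟨b, hbC, hbdg⟩ := Finset.mem_image.mp hjdg
    have hbd := mem_board.mp (hCb hbC)
    have hbbel : b.2 < b.1 := by
      unfold dg at hbdg
      omega
    refine ⟨b, ?_, ?_⟩
    · simp only [Finset.coe_filter, Set.mem_setOf_eq]
      exact ⟨hbC, hbbel⟩
    · show m + b.2 - b.1 = j
      unfold dg at hbdg
      omega

end AnassaAux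
namespace AnassaAux

lemma removal_card (m k p : ℕ) (hm : 1 ≤ m) (hk : 1 ≤ k) (hp : 1 ≤ p)
    (T : Finset (ℕ × ℕ) → Prop) [DecidablePred T]
    (hT : ∀ P : Finset (ℕ × ℕ), ∀ j < m, (T P ↔ T (insert (m, j) P))) :
    ((S m k p).filter (fun P => (∃ a ∈ P, a.1 = m ∧ a.2 < m) ∧ T P)).card
      = (m - p) * ((S m (k - 1) (p - 1)).filter (fun P => (∀ a ∈ P, a.1 ≠ m) ∧ T P)).card := by
  have hstep1 : ∀ P ∈ (S m k p).filter (fun P => (∃ a ∈ P, a.1 = m ∧ a.2 < m) ∧ T P),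
      P.filter (fun a => a.1 ≠ m) ∈
        (S m (k - 1) (p - 1)).filter (fun P => (∀ a ∈ P, a.1 ≠ m) ∧ T P) := by
    intro P hP
    obtain ⟨hPS, ⟨x, hx, hx1, hx2⟩, hTP⟩ := Finset.mem_filter.mp hP
    obtain ⟨hPb, hPcard, hPG, hPbel⟩ := mem_S.mp hPS
    have herase := erase_colm_eq hPG hx hx1
    have hxeq : (m, x.2) = x := by
      rw [Prod.ext_iff]
      exact ⟨hx1.symm, rfl⟩
    rw [Finset.mem_filter, mem_S]
    refine ⟨⟨(Finset.filter_subset _ _).trans hPb, ?_, good_subset (Finset.filter_subset _ _) hPG, ?_⟩,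
      ?_, ?_⟩
    · rw [herase, Finset.card_erase_of_mem hx, hPcard]
    · rw [herase, Finset.filter_erase, Finset.card_erase_of_mem, hPbel]
      rw [Finset.mem_filter]
      exact ⟨hx, by omega⟩
    · intro a ha
      exact (Finset.mem_filter.mp ha).2
    · have h2 := hT (P.erase x) x.2 hx2
      rw [hxeq, Finset.insert_erase hx] at h2
      rw [herase]
      exact h2.mpr hTP
  rw [Finset.card_eq_sum_card_fiberwise hstep1]
  have hfib : ∀ C ∈ (S m (k - 1) (p - 1)).filter (fun P => (∀ a ∈ P, a.1 ≠ m) ∧ T P),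
      (((S m k p).filter (fun P => (∃ a ∈ P, a.1 = m ∧ a.2 < m) ∧ T P)).filter
        (fun P => P.filter (fun a => a.1 ≠ m) = C)).card = m - p := by
    intro C hC
    obtain ⟨hCS, hCnocol, hCT⟩ := Finset.mem_filter.mp hC
    obtain ⟨hCb, hCcard, hCG, hCbel⟩ := mem_S.mp hCS
    have hbij : (((S m k p).filter (fun P => (∃ a ∈ P, a.1 = m ∧ a.2 < m) ∧ T P)).filter
        (fun P => P.filter (fun a => a.1 ≠ m) = C)).card
        = (((Finset.Icc 1 (m - 1) : Finset ℕ)).filter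
            (fun j => ((m : ℤ) - (j : ℕ)) ∉ C.image dg)).card := by
      apply Finset.card_bij' (fun P _ => rowm m P) (fun j _ => insert (m, j) C)
      · -- rowm lands in valid rows
        intro P hP
        obtain ⟨hP1, hρ⟩ := Finset.mem_filter.mp hP
        obtain ⟨hPS, ⟨x, hx, hx1, hx2⟩, hTP⟩ := Finset.mem_filter.mp hP1
        obtain ⟨hPb, hPcard, hPG, hPbel⟩ := mem_S.mp hPS
        have hbd := mem_board.mp (hPb hx)
        rw [rowm_eq hPG hx hx1]
        rw [Finset.mem_filter, Finset.mem_Icc]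
        refine ⟨⟨by omega, by omega⟩, ?_⟩
        intro hmem
        obtain ⟨b, hbC, hbdg⟩ := Finset.mem_image.mp hmem
        rw [← hρ] at hbC
        obtain ⟨hbP, hbne⟩ := Finset.mem_filter.mp hbC
        apply hbne
        have : b = x := by
          apply good_dg_inj hPG hbP hx
          rw [hbdg]
          unfold dg
          omega
        rw [this, hx1]
      · -- insertion lands in the fiber
        intro j hj
        rw [Finset.mem_filter, Finset.mem_Icc] at hj
        obtain ⟨⟨hj1, hj2⟩, hjdg⟩ := hj
        have hjm : j < m := by omega
        have hmjC : (m, j) ∉ C := fun h => hCnocol _ h rfl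
        have hGD : Good (insert (m, j) C) := by
          apply good_insert hCG
          · intro a ha
            exact hCnocol a ha
          · intro a ha hd
            apply hjdg
            have hdg' : dg (m, j) = (m : ℤ) - (j : ℕ) := rfl
            rw [← hdg', ← hd]
            exact Finset.mem_image_of_mem _ ha
        rw [Finset.mem_filter, Finset.mem_filter, mem_S]
        refine ⟨⟨⟨?_, ?_, hGD, ?_⟩, ⟨(m, j), Finset.mem_insert_self _ _, rfl, hjm⟩,
          (hT C j hjm).mp hCT⟩, ?_⟩
        · apply Finset.insert_subset
          · rw [mem_board]
            constructor <;> constructor <;> omega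
          · exact hCb
        · rw [Finset.card_insert_of_notMem hmjC, hCcard]
          omega
        · rw [Finset.filter_insert, if_pos hjm, Finset.card_insert_of_notMem
            (fun h => hmjC (Finset.mem_filter.mp h).1), hCbel]
          omega
        · rw [Finset.filter_insert, if_neg (by simp), Finset.filter_true_of_mem hCnocol]
      · -- left inverse
        intro P hP
        obtain ⟨hP1, hρ⟩ := Finset.mem_filter.mp hP
        obtain ⟨hPS, ⟨x, hx, hx1, hx2⟩, hTP⟩ := Finset.mem_filter.mp hP1
        obtain ⟨hPb, hPcard, hPG, hPbel⟩ := mem_S.mp hPS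
        rw [rowm_eq hPG hx hx1, ← hρ, erase_colm_eq hPG hx hx1]
        have hxeq : (m, x.2) = x := by
          rw [Prod.ext_iff]
          exact ⟨hx1.symm, rfl⟩
        rw [hxeq, Finset.insert_erase hx]
      · -- right inverse
        intro j hj
        have hGD : Good (insert (m, j) C) := by
          rw [Finset.mem_filter, Finset.mem_Icc] at hj
          apply good_insert hCG
          · intro a ha
            exact hCnocol a ha
          · intro a ha hd
            apply hj.2
            have hdg' : dg (m, j) = (m : ℤ) - (j : ℕ) := rfl
            rw [← hdg', ← hd]
            exact Finset.mem_image_of_mem _ ha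
        exact rowm_eq hGD (Finset.mem_insert_self _ _) rfl
    rw [hbij]
    have hcnt := below_dg_count hCb hCG hCbel
    have htot := Finset.card_filter_add_card_filter_not
      (s := (Finset.Icc 1 (m - 1) : Finset ℕ)) (p := fun j => ((m : ℤ) - (j : ℕ)) ∈ C.image dg)
    rw [Nat.card_Icc] at htot
    omega
  rw [Finset.sum_congr rfl hfib, Finset.sum_const, smul_eq_mul, mul_comm]

end AnassaAux
namespace AnassaAux

lemma class1_card (m k p : ℕ) (hm : 1 ≤ m) :
    ((S m k p).filter (fun P => (¬ ∃ a ∈ P, a.2 = m) ∧ ¬ ∃ a ∈ P, a.1 = m ∧ a.2 < m)).card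
      = (S (m - 1) k p).card := by
  have heq : (S m k p).filter (fun P => (¬ ∃ a ∈ P, a.2 = m) ∧ ¬ ∃ a ∈ P, a.1 = m ∧ a.2 < m)
      = (S m k p).filter (fun P => (∀ a ∈ P, a.1 ≠ m) ∧ (∀ a ∈ P, a.2 ≠ m)) := by
    apply Finset.filter_congr
    intro P hP
    obtain ⟨hPb, _, _, _⟩ := mem_S.mp hP
    constructor
    · rintro ⟨hX, hY⟩
      push_neg at hX hY
      refine ⟨?_, hX⟩
      intro a ha ham
      have h1 := hY a ha ham
      have h2 := mem_board.mp (hPb ha)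
      exact hX a ha (by omega)
    · rintro ⟨hcol, hrow⟩
      constructor
      · rintro ⟨a, ha, h2⟩
        exact hrow a ha h2
      · rintro ⟨a, ha, h1, _⟩
        exact hcol a ha h1
  rw [heq, S_pred_eq m k p hm]

lemma class3_card (m k p : ℕ) (hm : 1 ≤ m) (hk : 1 ≤ k) :
    ((S m k p).filter (fun P => (∃ a ∈ P, a.2 = m) ∧ ¬ ∃ a ∈ P, a.1 = m ∧ a.2 < m)).card
      = (m - (k - 1)) * (S (m - 1) (k - 1) p).card := by
  have heq : (S m k p).filter (fun P => (∃ a ∈ P, a.2 = m) ∧ ¬ ∃ a ∈ P, a.1 = m ∧ a.2 < m)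
      = (S m k p).filter (fun P => (∃ a ∈ P, a.2 = m) ∧
          (∀ a ∈ P, a.1 = m → (a.2 = m ∧ m ≤ m))) := by
    apply Finset.filter_congr
    intro P hP
    obtain ⟨hPb, _, _, _⟩ := mem_S.mp hP
    constructor
    · rintro ⟨hX, hY⟩
      push_neg at hY
      refine ⟨hX, ?_⟩
      intro a ha ham
      have h1 := hY a ha ham
      have h2 := mem_board.mp (hPb ha)
      exact ⟨by omega, le_refl m⟩
    · rintro ⟨hX, hcolm⟩
      refine ⟨hX, ?_⟩
      rintro ⟨a, ha, h1, h2⟩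
      have := (hcolm a ha h1).1
      omega
  rw [heq, chain_card m k p m hm hk (by omega) (le_refl m)]

lemma class2_card (m k p : ℕ) (hm : 1 ≤ m) (hk : 1 ≤ k) (hp : 1 ≤ p) :
    ((S m k p).filter (fun P => (¬ ∃ a ∈ P, a.2 = m) ∧ ∃ a ∈ P, a.1 = m ∧ a.2 < m)).card
      = (m - p) * (S (m - 1) (k - 1) (p - 1)).card := by
  have heq : (S m k p).filter (fun P => (¬ ∃ a ∈ P, a.2 = m) ∧ ∃ a ∈ P, a.1 = m ∧ a.2 < m)
      = (S m k p).filter (fun P => (∃ a ∈ P, a.1 = m ∧ a.2 < m) ∧ (∀ a ∈ P, a.2 ≠ m)) := by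
    apply Finset.filter_congr
    intro P _
    constructor
    · rintro ⟨hX, hY⟩
      push_neg at hX
      exact ⟨hY, hX⟩
    · rintro ⟨hY, hrow⟩
      refine ⟨?_, hY⟩
      rintro ⟨a, ha, h2⟩
      exact hrow a ha h2
  rw [heq, removal_card m k p hm hk hp (fun P => ∀ a ∈ P, a.2 ≠ m) ?hT]
  · rw [S_pred_eq m (k - 1) (p - 1) hm]
  case hT =>
    intro P j hj
    constructor
    · intro h a ha
      rcases Finset.mem_insert.mp ha with rfl | ha'
      · simp
        omega
      · exact h a ha'
    · intro h a ha
      exact h a (Finset.mem_insert_of_mem ha)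

lemma class4_card (m k p : ℕ) (hm : 1 ≤ m) (hk : 2 ≤ k) (hp : 1 ≤ p) :
    ((S m k p).filter (fun P => (∃ a ∈ P, a.2 = m) ∧ ∃ a ∈ P, a.1 = m ∧ a.2 < m)).card
      = (m - p) * ((m - 1 - (k - 2)) * (S (m - 1) (k - 2) (p - 1)).card) := by
  have heq : (S m k p).filter (fun P => (∃ a ∈ P, a.2 = m) ∧ ∃ a ∈ P, a.1 = m ∧ a.2 < m)
      = (S m k p).filter (fun P => (∃ a ∈ P, a.1 = m ∧ a.2 < m) ∧ ∃ a ∈ P, a.2 = m) := by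
    apply Finset.filter_congr
    intro P _
    exact and_comm
  rw [heq, removal_card m k p hm (by omega) hp (fun P => ∃ a ∈ P, a.2 = m) ?hX]
  case hX =>
    intro P j hj
    constructor
    · rintro ⟨a, ha, h2⟩
      exact ⟨a, Finset.mem_insert_of_mem ha, h2⟩
    · rintro ⟨a, ha, h2⟩
      rcases Finset.mem_insert.mp ha with rfl | ha'
      · simp at h2
        omega
      · exact ⟨a, ha', h2⟩
  congr 1
  have heq2 : (S m (k - 1) (p - 1)).filter (fun P => (∀ a ∈ P, a.1 ≠ m) ∧ ∃ a ∈ P, a.2 = m)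
      = (S m (k - 1) (p - 1)).filter (fun P => (∃ a ∈ P, a.2 = m) ∧
          (∀ a ∈ P, a.1 = m → (a.2 = m ∧ m ≤ m - 1))) := by
    apply Finset.filter_congr
    intro P _
    constructor
    · rintro ⟨hcol, hX⟩
      refine ⟨hX, ?_⟩
      intro a ha h1
      exact absurd h1 (hcol a ha)
    · rintro ⟨hX, hcolm⟩
      refine ⟨?_, hX⟩
      intro a ha h1
      have := (hcolm a ha h1).2
      omega
  rw [heq2, chain_card m (k - 1) (p - 1) (m - 1) hm (by omega) (le_refl _) (by omega)]
  have : k - 1 - 1 = k - 2 := by omega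
  rw [this]

end AnassaAux
namespace AnassaAux

lemma S_card_zero_k (m k p : ℕ) (h : m < k) : (S m k p).card = 0 := by
  rw [Finset.card_eq_zero, Finset.eq_empty_iff_forall_notMem]
  intro P hP
  obtain ⟨hPb, hPc, hPG, _⟩ := mem_S.mp hP
  have h1 : (P.image Prod.fst).card = k := by rw [card_eq_card_image_fst hPG, hPc]
  have h2 : P.image Prod.fst ⊆ Finset.Icc 1 m := by
    intro x hx
    obtain ⟨a, ha, rfl⟩ := Finset.mem_image.mp hx
    have := mem_board.mp (hPb ha)
    rw [Finset.mem_Icc]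
    omega
  have h3 := Finset.card_le_card h2
  rw [h1, Nat.card_Icc] at h3
  omega

lemma S_card_zero_p (m k p : ℕ) (h : m < p) : (S m k p).card = 0 := by
  rw [Finset.card_eq_zero, Finset.eq_empty_iff_forall_notMem]
  intro P hP
  obtain ⟨hPb, hPc, hPG, hbel⟩ := mem_S.mp hP
  have h1 : (P.image Prod.fst).card = k := by rw [card_eq_card_image_fst hPG, hPc]
  have h2 : P.image Prod.fst ⊆ Finset.Icc 1 m := by
    intro x hx
    obtain ⟨a, ha, rfl⟩ := Finset.mem_image.mp hx
    have := mem_board.mp (hPb ha)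
    rw [Finset.mem_Icc]
    omega
  have h3 := Finset.card_le_card h2
  rw [h1, Nat.card_Icc] at h3
  have h4 := Finset.card_filter_le P (fun a => a.2 < a.1)
  rw [hbel, hPc] at h4
  omega

lemma filter_zero_of_nonempty (m p : ℕ) (q : Finset (ℕ × ℕ) → Prop) [DecidablePred q]
    (hw : ∀ P, q P → P.Nonempty) : ((S m 0 p).filter q).card = 0 := by
  rw [Finset.card_eq_zero, Finset.eq_empty_iff_forall_notMem]
  intro P hP
  obtain ⟨hPS, hq⟩ := Finset.mem_filter.mp hP
  obtain ⟨_, hPc, _, _⟩ := mem_S.mp hPS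
  obtain ⟨a, ha⟩ := hw P hq
  rw [Finset.card_eq_zero.mp hPc] at ha
  exact absurd ha (Finset.notMem_empty a)

lemma filter_zero_of_Y (m k : ℕ) (q : Finset (ℕ × ℕ) → Prop) [DecidablePred q]
    (hw : ∀ P, q P → ∃ a ∈ P, a.1 = m ∧ a.2 < m) : ((S m k 0).filter q).card = 0 := by
  rw [Finset.card_eq_zero, Finset.eq_empty_iff_forall_notMem]
  intro P hP
  obtain ⟨hPS, hq⟩ := Finset.mem_filter.mp hP
  obtain ⟨_, _, _, hbel⟩ := mem_S.mp hPS
  obtain ⟨a, ha, ha1, ha2⟩ := hw P hq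
  have hmem : a ∈ P.filter (fun a => a.2 < a.1) := Finset.mem_filter.mpr ⟨ha, by omega⟩
  rw [Finset.card_eq_zero.mp hbel] at hmem
  exact absurd hmem (Finset.notMem_empty a)

lemma filter_zero_XY_k1 (m p : ℕ) :
    ((S m 1 p).filter (fun P => (∃ a ∈ P, a.2 = m) ∧ ∃ a ∈ P, a.1 = m ∧ a.2 < m)).card = 0 := by
  rw [Finset.card_eq_zero, Finset.eq_empty_iff_forall_notMem]
  intro P hP
  obtain ⟨hPS, ⟨ax, hax, hax2⟩, ⟨ay, hay, hay1, hay2⟩⟩ := Finset.mem_filter.mp hP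
  obtain ⟨_, hPc, _, _⟩ := mem_S.mp hPS
  obtain ⟨z, hz⟩ := Finset.card_eq_one.mp hPc
  rw [hz, Finset.mem_singleton] at hax hay
  rw [hax] at hax2
  rw [hay] at hay2
  omega

end AnassaAux

open AnassaAux in
/-- Recurrence for nonattacking anassa placements with `p` pieces strictly below the
main diagonal. -/
theorem anassa_recurrence (m k p : ℕ) (hm : 1 ≤ m) :
    (anassaCount3 m k p : ℤ) =
      anassaCount3Z (m - 1) k p +
        ((m : ℤ) - k + 1) * anassaCount3Z (m - 1) ((k : ℤ) - 1) p +
        ((m : ℤ) - p) * anassaCount3Z (m - 1) ((k : ℤ) - 1) ((p : ℤ) - 1) +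
        ((m : ℤ) - p) * ((m : ℤ) - k + 1) *
          anassaCount3Z (m - 1) ((k : ℤ) - 2) ((p : ℤ) - 1) := by
  have hAS : ∀ m' k' p', anassaCount3 m' k' p' = (S m' k' p').card := fun _ _ _ => rfl
  have hsplit : (S m k p).card =
      ((S m k p).filter (fun P => (∃ a ∈ P, a.2 = m) ∧ ∃ a ∈ P, a.1 = m ∧ a.2 < m)).card +
      ((S m k p).filter (fun P => (∃ a ∈ P, a.2 = m) ∧ ¬ ∃ a ∈ P, a.1 = m ∧ a.2 < m)).card +
      ((S m k p).filter (fun P => (¬ ∃ a ∈ P, a.2 = m) ∧ ∃ a ∈ P, a.1 = m ∧ a.2 < m)).card +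
      ((S m k p).filter (fun P => (¬ ∃ a ∈ P, a.2 = m) ∧ ¬ ∃ a ∈ P, a.1 = m ∧ a.2 < m)).card := by
    have hA := Finset.card_filter_add_card_filter_not (s := S m k p)
      (p := fun P => ∃ a ∈ P, a.2 = m)
    have hB := Finset.card_filter_add_card_filter_not
      (s := (S m k p).filter (fun P => ∃ a ∈ P, a.2 = m))
      (p := fun P => ∃ a ∈ P, a.1 = m ∧ a.2 < m)
    have hC := Finset.card_filter_add_card_filter_not
      (s := (S m k p).filter (fun P => ¬ ∃ a ∈ P, a.2 = m))
      (p := fun P => ∃ a ∈ P, a.1 = m ∧ a.2 < m)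
    rw [Finset.filter_filter, Finset.filter_filter] at hB
    rw [Finset.filter_filter, Finset.filter_filter] at hC
    omega
  have hZ1 : anassaCount3Z (m - 1) (k : ℤ) (p : ℤ) = ((S (m - 1) k p).card : ℤ) := by
    rw [anassaCount3Z, if_pos ⟨by omega, by omega⟩]
    have e1 : ((k : ℤ)).toNat = k := by omega
    have e2 : ((p : ℤ)).toNat = p := by omega
    rw [e1, e2, hAS]
  have key3 : ∀ k' p', 1 ≤ k' →
      (((m - (k' - 1)) * (S (m - 1) (k' - 1) p').card : ℕ) : ℤ)
        = ((m : ℤ) - k' + 1) * ((S (m - 1) (k' - 1) p').card : ℤ) := by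
    intro k' p' hk'
    rcases le_or_gt k' m with h | h
    · have e : ((m - (k' - 1) : ℕ) : ℤ) = (m : ℤ) - k' + 1 := by omega
      push_cast
      rw [e]
    · rw [S_card_zero_k (m - 1) (k' - 1) p' (by omega)]
      push_cast
      ring
  have key2 : ∀ k' p', 1 ≤ p' →
      (((m - p') * (S (m - 1) k' (p' - 1)).card : ℕ) : ℤ)
        = ((m : ℤ) - p') * ((S (m - 1) k' (p' - 1)).card : ℤ) := by
    intro k' p' hp'
    rcases le_or_gt p' m with h | h
    · have e : ((m - p' : ℕ) : ℤ) = (m : ℤ) - p' := by omega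
      push_cast
      rw [e]
    · rw [S_card_zero_p (m - 1) k' (p' - 1) (by omega)]
      push_cast
      ring
  have key4 : 2 ≤ k → 1 ≤ p →
      (((m - p) * ((m - 1 - (k - 2)) * (S (m - 1) (k - 2) (p - 1)).card) : ℕ) : ℤ)
        = ((m : ℤ) - p) * ((m : ℤ) - k + 1) * ((S (m - 1) (k - 2) (p - 1)).card : ℤ) := by
    intro hk hp
    rcases le_or_gt p m with hpm | hpm
    · rcases le_or_gt k (m + 1) with hkm | hkm
      · have e1 : ((m - p : ℕ) : ℤ) = (m : ℤ) - p := by omega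
        have e2 : ((m - 1 - (k - 2) : ℕ) : ℤ) = (m : ℤ) - k + 1 := by omega
        push_cast
        rw [e1, e2]
        ring
      · rw [S_card_zero_k (m - 1) (k - 2) (p - 1) (by omega)]
        push_cast
        ring
    · rw [S_card_zero_p (m - 1) (k - 2) (p - 1) (by omega)]
      push_cast
      ring
  rcases Nat.eq_zero_or_pos k with hk0 | hk1
  · -- k = 0
    subst hk0
    have hZ2 : anassaCount3Z (m - 1) ((0 : ℕ) - 1 : ℤ) (p : ℤ) = 0 := by
      rw [anassaCount3Z, if_neg (by omega)]
    have hZ3 : anassaCount3Z (m - 1) ((0 : ℕ) - 1 : ℤ) ((p : ℤ) - 1) = 0 := by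
      rw [anassaCount3Z, if_neg (by omega)]
    have hZ4 : anassaCount3Z (m - 1) ((0 : ℕ) - 2 : ℤ) ((p : ℤ) - 1) = 0 := by
      rw [anassaCount3Z, if_neg (by omega)]
    have hc4 : ((S m 0 p).filter
        (fun P => (∃ a ∈ P, a.2 = m) ∧ ∃ a ∈ P, a.1 = m ∧ a.2 < m)).card = 0 :=
      filter_zero_of_nonempty m p _ (fun P hq => by
        obtain ⟨⟨a, ha, _⟩, _⟩ := hq; exact ⟨a, ha⟩)
    have hc3 : ((S m 0 p).filter
        (fun P => (∃ a ∈ P, a.2 = m) ∧ ¬ ∃ a ∈ P, a.1 = m ∧ a.2 < m)).card = 0 :=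
      filter_zero_of_nonempty m p _ (fun P hq => by
        obtain ⟨⟨a, ha, _⟩, _⟩ := hq; exact ⟨a, ha⟩)
    have hc2 : ((S m 0 p).filter
        (fun P => (¬ ∃ a ∈ P, a.2 = m) ∧ ∃ a ∈ P, a.1 = m ∧ a.2 < m)).card = 0 :=
      filter_zero_of_nonempty m p _ (fun P hq => by
        obtain ⟨_, ⟨a, ha, _⟩⟩ := hq; exact ⟨a, ha⟩)
    rw [hAS, hsplit, hc4, hc3, hc2, class1_card m 0 p hm, hZ1, hZ2, hZ3, hZ4]
    push_cast
    ring
  · rcases Nat.eq_zero_or_pos p with hp0 | hp1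
    · -- p = 0, k ≥ 1
      subst hp0
      have hZ2 : anassaCount3Z (m - 1) ((k : ℤ) - 1) ((0 : ℕ) : ℤ) =
          ((S (m - 1) (k - 1) 0).card : ℤ) := by
        rw [anassaCount3Z, if_pos ⟨by omega, by omega⟩]
        have e1 : ((k : ℤ) - 1).toNat = k - 1 := by omega
        have e2 : (((0 : ℕ) : ℤ)).toNat = 0 := by omega
        rw [e1, e2, hAS]
      have hZ3 : anassaCount3Z (m - 1) ((k : ℤ) - 1) (((0 : ℕ) : ℤ) - 1) = 0 := by
        rw [anassaCount3Z, if_neg (by omega)]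
      have hZ4 : anassaCount3Z (m - 1) ((k : ℤ) - 2) (((0 : ℕ) : ℤ) - 1) = 0 := by
        rw [anassaCount3Z, if_neg (by omega)]
      have hc4 : ((S m k 0).filter
          (fun P => (∃ a ∈ P, a.2 = m) ∧ ∃ a ∈ P, a.1 = m ∧ a.2 < m)).card = 0 :=
        filter_zero_of_Y m k _ (fun P hq => hq.2)
      have hc2 : ((S m k 0).filter
          (fun P => (¬ ∃ a ∈ P, a.2 = m) ∧ ∃ a ∈ P, a.1 = m ∧ a.2 < m)).card = 0 :=
        filter_zero_of_Y m k _ (fun P hq => hq.2)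
      rw [hAS, hsplit, hc4, hc2, class3_card m k 0 hm hk1, class1_card m k 0 hm,
        hZ1, hZ2, hZ3, hZ4, Nat.cast_add, Nat.cast_add, Nat.cast_add, key3 k 0 hk1]
      push_cast
      ring
    · -- k ≥ 1, p ≥ 1
      have hZ2 : anassaCount3Z (m - 1) ((k : ℤ) - 1) (p : ℤ) =
          ((S (m - 1) (k - 1) p).card : ℤ) := by
        rw [anassaCount3Z, if_pos ⟨by omega, by omega⟩]
        have e1 : ((k : ℤ) - 1).toNat = k - 1 := by omega
        have e2 : ((p : ℤ)).toNat = p := by omega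
        rw [e1, e2, hAS]
      have hZ3 : anassaCount3Z (m - 1) ((k : ℤ) - 1) ((p : ℤ) - 1) =
          ((S (m - 1) (k - 1) (p - 1)).card : ℤ) := by
        rw [anassaCount3Z, if_pos ⟨by omega, by omega⟩]
        have e1 : ((k : ℤ) - 1).toNat = k - 1 := by omega
        have e2 : ((p : ℤ) - 1).toNat = p - 1 := by omega
        rw [e1, e2, hAS]
      rcases lt_or_ge k 2 with hk2 | hk2
      · -- k = 1
        have hk1' : k = 1 := by omega
        subst hk1'
        have hZ4 : anassaCount3Z (m - 1) (((1 : ℕ) : ℤ) - 2) ((p : ℤ) - 1) = 0 := by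
          rw [anassaCount3Z, if_neg (by omega)]
        have hc4 := filter_zero_XY_k1 m p
        rw [hAS, hsplit, hc4, class3_card m 1 p hm (by omega), class2_card m 1 p hm (by omega) hp1,
          class1_card m 1 p hm, hZ1, hZ2, hZ3, hZ4, Nat.cast_add, Nat.cast_add, Nat.cast_add,
          key3 1 p (by omega), key2 0 p hp1]
        push_cast
        ring
      · -- k ≥ 2
        have hZ4 : anassaCount3Z (m - 1) ((k : ℤ) - 2) ((p : ℤ) - 1) =
            ((S (m - 1) (k - 2) (p - 1)).card : ℤ) := by
          rw [anassaCount3Z, if_pos ⟨by omega, by omega⟩]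
          have e1 : ((k : ℤ) - 2).toNat = k - 2 := by omega
          have e2 : ((p : ℤ) - 1).toNat = p - 1 := by omega
          rw [e1, e2, hAS]
        rw [hAS, hsplit, class4_card m k p hm hk2 hp1, class3_card m k p hm hk1,
          class2_card m k p hm hk1 hp1, class1_card m k p hm,
          hZ1, hZ2, hZ3, hZ4, Nat.cast_add, Nat.cast_add, Nat.cast_add,
          key3 k p hk1, key2 (k - 1) p hp1, key4 hk2 hp1]
        ring
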